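/- Let (S_X, S_Z) be a CSS stabilizer code on a finite type Q satisfying the duality, single-logical-qubit, intersection, and T-invariance assumptions, let α : Finset Q be tolerable, and let ρ be an encoded state. Then E_α is nonempty and (1/|S_X|) · Σ_{c ∈ S_X} X_c (U X_α ρ X_α U†) X_c = X_α ((1/|E_α|) · Σ_{z ∈ E_α} Z_z (U ρ U†) Z_z) X_α. (Theorem 1, tolerable case: a tolerable X error propagates through the transversal T-type gate U followed by S_X-depolarization into the original error together with a uniformly random Z error drawn from E_α applied after U.) -/

import Mathlib

open Finset
open scoped symmDiff Matrix

namespace CC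

variable {Q : Type*} [Fintype Q] [DecidableEq Q]

/-- A subgroup of the abelian group `(Finset Q, ∆)`. -/
def IsSubgroup (S : Set (Finset Q)) : Prop :=
  ∅ ∈ S ∧ ∀ a ∈ S, ∀ b ∈ S, a ∆ b ∈ S

/-- The subgroup of `(Finset Q, ∆)` generated by a set. -/
def closure (T : Set (Finset Q)) : Set (Finset Q) :=
  ⋂₀ {S : Set (Finset Q) | IsSubgroup S ∧ T ⊆ S}

/-- A CSS stabilizer code on the qubits `Q`. -/
structure CSS (Q : Type*) [Fintype Q] [DecidableEq Q] where
  SX : Set (Finset Q)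
  SZ : Set (Finset Q)
  hSX : IsSubgroup SX
  hSZ : IsSubgroup SZ
  comm : ∀ a ∈ SZ, ∀ b ∈ SX, 2 ∣ (a ∩ b).card

def ZX (C : CSS Q) : Set (Finset Q) := {γ | ∀ f ∈ C.SZ, 2 ∣ (γ ∩ f).card}

def ZZ (C : CSS Q) : Set (Finset Q) := {z | ∀ c ∈ C.SX, 2 ∣ (z ∩ c).card}

/-- Duality assumption. -/
def Dual (C : CSS Q) : Prop :=
  C.SZ = {z | ∀ γ ∈ ZX C, 2 ∣ (z ∩ γ).card} ∧
  C.SX = {c | ∀ z ∈ ZZ C, 2 ∣ (c ∩ z).card}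

def LogicalX (C : CSS Q) (l : Finset Q) : Prop := l ∈ ZX C ∧ l ∉ C.SX

def LogicalZ (C : CSS Q) (l : Finset Q) : Prop := l ∈ ZZ C ∧ l ∉ C.SZ

/-- Single-logical-qubit assumption. -/
def SingleQubit (C : CSS Q) : Prop :=
  (ZX C ≠ C.SX ∧ ∀ l l', LogicalX C l → LogicalX C l' → l ∆ l' ∈ C.SX) ∧
  (ZZ C ≠ C.SZ ∧ ∀ l l', LogicalZ C l → LogicalZ C l' → l ∆ l' ∈ C.SZ)

/-- Intersection axiom. -/
def Inter (C : CSS Q) : Prop :=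
  ZZ C = {x | ∃ α ∈ ZX C, ∃ β ∈ ZX C, x = α ∩ β}

def G (C : CSS Q) (α : Finset Q) : Set (Finset Q) :=
  closure (C.SZ ∪ {x | ∃ β ∈ ZX C, x = α ∩ β})

def H (C : CSS Q) (α : Finset Q) : Set (Finset Q) :=
  closure (C.SZ ∪ {x | ∃ β ∈ C.SX, x = α ∩ β})

def Zof (K : Set (Finset Q)) : Set (Finset Q) := {γ | ∀ h ∈ K, 2 ∣ (γ ∩ h).card}

def Tolerable (C : CSS Q) (α : Finset Q) : Prop := ∀ z ∈ G C α, ¬ LogicalZ C z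

def g (b : Q → ℤ) (s : Finset Q) : ℤ := ∑ q ∈ s, b q

/-- T-invariance assumption. -/
def TInv (C : CSS Q) (b : Q → ℤ) : Prop :=
  (∀ β ∈ C.SX, (8 : ℤ) ∣ g b β) ∧
  (∀ β ∈ C.SX, ∀ γ ∈ ZX C, (8 : ℤ) ∣ (g b β - 2 * g b (γ ∩ β)))

def E (C : CSS Q) (b : Q → ℤ) (α : Finset Q) : Set (Finset Q) :=
  {z | ∀ γ ∈ Zof (G C α), g b (γ ∩ α) ≡ 2 * ((z ∩ γ).card : ℤ) [ZMOD 4]}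

/- Quantum setting -/

abbrev M (Q : Type*) [Fintype Q] [DecidableEq Q] :=
  Matrix (Q → ZMod 2) (Q → ZMod 2) ℂ

def supp (v : Q → ZMod 2) : Finset Q := Finset.univ.filter (fun q => v q = 1)

def ind (α : Finset Q) : Q → ZMod 2 := fun q => if q ∈ α then 1 else 0

def XM (α : Finset Q) : M Q :=
  Matrix.of fun u v => if u = v + ind α then (1 : ℂ) else 0

noncomputable def ZM (α : Finset Q) : M Q :=
  Matrix.diagonal fun v => (-1 : ℂ) ^ (supp v ∩ α).card

noncomputable def AM (b : Q → ℤ) (α : Finset Q) : M Q :=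
  Matrix.diagonal fun v => Complex.I ^ (g b (α ∩ supp v))

noncomputable def UM (b : Q → ℤ) : M Q :=
  Matrix.diagonal fun v => Complex.exp (Real.pi * Complex.I / 4) ^ (g b (supp v))

def Encoded (C : CSS Q) (ρ : M Q) : Prop :=
  ρ.trace = 1 ∧
  (∀ c ∈ C.SX, XM c * ρ = ρ ∧ ρ * XM c = ρ) ∧
  (∀ f ∈ C.SZ, ZM f * ρ = ρ ∧ ρ * ZM f = ρ)

instance : Std.Commutative (α := Finset Q) (· ∆ ·) := ⟨symmDiff_comm⟩
instance : Std.Associative (α := Finset Q) (· ∆ ·) := ⟨symmDiff_assoc⟩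

/-- Iterated symmetric difference over a finite index set. -/
def bigΔ {ι : Type*} (s : Finset ι) (f : ι → Finset Q) : Finset Q :=
  s.fold (· ∆ ·) ∅ f

/-! ### Auxiliary lemmas -/

section Aux
variable {Q : Type*} [Fintype Q] [DecidableEq Q]

omit [Fintype Q] in
lemma symmDiffEq (a b : Finset Q) : a ∆ b = (a ∪ b) \ (a ∩ b) := by
  ext q; simp [symmDiff]; tauto

omit [Fintype Q] in
lemma inter_symmDiff_distrib (w a b : Finset Q) : (a ∆ b) ∩ w = (a ∩ w) ∆ (b ∩ w) := by
  ext q; simp [symmDiff]; tauto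

omit [Fintype Q] in
lemma g_symmDiff (b : Q → ℤ) (s t : Finset Q) :
    g b (s ∆ t) = g b s + g b t - 2 * g b (s ∩ t) := by
  have h1 : g b (s ∪ t) + g b (s ∩ t) = g b s + g b t := Finset.sum_union_inter
  have h2 : g b (s ∆ t) = g b (s ∪ t) - g b (s ∩ t) := by
    rw [symmDiffEq, g, Finset.sum_sdiff_eq_sub Finset.inter_subset_union]; rfl
  omega

omit [Fintype Q] [DecidableEq Q] in
lemma g_parity (b : Q → ℤ) (hb : ∀ q, Odd (b q)) (s : Finset Q) :
    (2:ℤ) ∣ (g b s - s.card) := by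
  have h : g b s - s.card = ∑ q ∈ s, (b q - 1) := by
    rw [Finset.sum_sub_distrib]; simp [g]
  rw [h]
  exact Finset.dvd_sum fun q _ => by obtain ⟨k, hk⟩ := hb q; exact ⟨k, by omega⟩

omit [Fintype Q] in
lemma card_symmDiff' (a b : Finset Q) :
    ((a ∆ b).card : ℤ) = (a.card : ℤ) + b.card - 2 * (a ∩ b).card := by
  have := g_symmDiff (fun _ => (1:ℤ)) a b
  simpa [g] using this

omit [Fintype Q] in
lemma card_inter_symmDiff_parity (w a b : Finset Q) :
    (2:ℤ) ∣ (((a ∆ b) ∩ w).card : ℤ) - (a ∩ w).card - (b ∩ w).card := by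
  rw [inter_symmDiff_distrib, card_symmDiff']
  exact ⟨-((a ∩ w) ∩ (b ∩ w)).card, by ring⟩

omit [Fintype Q] in
lemma card_inter_symmDiff_parity' (w a b : Finset Q) :
    (2:ℤ) ∣ ((w ∩ (a ∆ b)).card : ℤ) - (w ∩ a).card - (w ∩ b).card := by
  rw [Finset.inter_comm w, Finset.inter_comm w, Finset.inter_comm w]
  exact card_inter_symmDiff_parity w a b

omit [Fintype Q] in
lemma subset_closure' (T : Set (Finset Q)) : T ⊆ closure T :=
  fun x hx S hS => hS.2 hx

omit [Fintype Q] in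
lemma closure_isSubgroup (T : Set (Finset Q)) : IsSubgroup (closure T) := by
  constructor
  · exact fun S hS => hS.1.1
  · intro a ha b hb S hS
    exact hS.1.2 a (ha S hS) b (hb S hS)

omit [Fintype Q] in
lemma closure_min {T S : Set (Finset Q)} (hS : IsSubgroup S) (h : T ⊆ S) : closure T ⊆ S :=
  fun x hx => hx S ⟨hS, h⟩

omit [Fintype Q] in
lemma evenInter_subgroup (γ : Finset Q) : IsSubgroup {h | 2 ∣ (γ ∩ h).card} := by
  refine ⟨by simp, fun a ha b hb => ?_⟩
  have := card_inter_symmDiff_parity' γ a b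
  simp only [Set.mem_setOf_eq] at *
  have ha' : (2:ℤ) ∣ ((γ ∩ a).card : ℤ) := Int.natCast_dvd_natCast.2 ha
  have hb' : (2:ℤ) ∣ ((γ ∩ b).card : ℤ) := Int.natCast_dvd_natCast.2 hb
  have h2 : (2:ℤ) ∣ ((γ ∩ (a ∆ b)).card : ℤ) := by omega
  exact_mod_cast h2

omit [Fintype Q] in
lemma Zof_isSubgroup (K : Set (Finset Q)) : IsSubgroup (Zof K) := by
  constructor
  · intro h _; simp [Zof]
  · intro a ha b hb h hh
    have ha' := Int.natCast_dvd_natCast.2 (ha h hh)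
    have hb' := Int.natCast_dvd_natCast.2 (hb h hh)
    have h2 : (2:ℤ) ∣ (((a ∆ b) ∩ h).card : ℤ) := by
      have := card_inter_symmDiff_parity h a b; omega
    exact_mod_cast h2

omit [Fintype Q] in
lemma Zof_antitone {K L : Set (Finset Q)} (h : K ⊆ L) : Zof L ⊆ Zof K :=
  fun γ hγ k hk => hγ k (h hk)

omit [Fintype Q] in
lemma subset_Zof_Zof (K : Set (Finset Q)) : K ⊆ Zof (Zof K) :=
  fun k hk γ hγ => by rw [Finset.inter_comm]; exact hγ k hk

omit [Fintype Q] in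
lemma Zof_Zof_Zof (K : Set (Finset Q)) : Zof (Zof (Zof K)) = Zof K :=
  le_antisymm (Zof_antitone (subset_Zof_Zof K)) (subset_Zof_Zof (Zof K))

omit [Fintype Q] in
lemma mem_Zof_closure {T : Set (Finset Q)} {γ : Finset Q} (h : ∀ t ∈ T, 2 ∣ (γ ∩ t).card) :
    γ ∈ Zof (closure T) :=
  fun t ht => closure_min (evenInter_subgroup γ) h ht

lemma neg_one_pow_congr {m n : ℕ} (h : (2:ℤ) ∣ (m:ℤ) - n) : ((-1:ℂ))^m = (-1)^n := by
  have h2 : m % 2 = n % 2 := by omega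
  conv_lhs => rw [← Nat.div_add_mod m 2]
  conv_rhs => rw [← Nat.div_add_mod n 2]
  rw [pow_add, pow_add, pow_mul, pow_mul, h2]
  simp

omit [Fintype Q] in
lemma symmDiff_involutive' (c₀ : Finset Q) : ∀ c : Finset Q, (c ∆ c₀) ∆ c₀ = c := by
  intro c; rw [symmDiff_assoc, symmDiff_self, symmDiff_bot]

open scoped Classical in
lemma char_sum (S : Set (Finset Q)) (hS : IsSubgroup S) (hf : S.Finite) (w : Finset Q) :
    ∑ c ∈ hf.toFinset, ((-1:ℂ)) ^ ((w ∩ c).card) =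
      if ∀ c ∈ S, 2 ∣ (w ∩ c).card then (hf.toFinset.card : ℂ) else 0 := by
  split_ifs with hcond
  · rw [Finset.sum_congr rfl (fun c hc => ?_), Finset.sum_const, nsmul_eq_mul, mul_one]
    have h2 : Even ((w ∩ c).card) := (even_iff_two_dvd).2 (hcond c (hf.mem_toFinset.1 hc))
    exact h2.neg_one_pow
  · push_neg at hcond
    obtain ⟨c₀, hc₀S, hc₀⟩ := hcond
    have key : ∑ c ∈ hf.toFinset, ((-1:ℂ)) ^ ((w ∩ c).card) =
        ∑ c ∈ hf.toFinset, -((-1:ℂ)) ^ ((w ∩ c).card) := by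
      refine Finset.sum_nbij' (fun c => c ∆ c₀) (fun c => c ∆ c₀) ?_ ?_ ?_ ?_ ?_
      · intro a ha; exact hf.mem_toFinset.2 (hS.2 a (hf.mem_toFinset.1 ha) c₀ hc₀S)
      · intro a ha; exact hf.mem_toFinset.2 (hS.2 a (hf.mem_toFinset.1 ha) c₀ hc₀S)
      · intro a _; exact symmDiff_involutive' c₀ a
      · intro a _; exact symmDiff_involutive' c₀ a
      · intro a _
        have hpar := card_inter_symmDiff_parity' w a c₀
        have hodd : ¬ (2:ℤ) ∣ ((w ∩ c₀).card : ℤ) := fun h => hc₀ (Int.natCast_dvd_natCast.1 h)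
        have he : ((-1:ℂ)) ^ ((w ∩ (a ∆ c₀)).card) = ((-1:ℂ)) ^ ((w ∩ a).card + (w ∩ c₀).card) := by
          apply neg_one_pow_congr; push_cast; omega
        rw [he, pow_add]
        have hm : ((-1:ℂ)) ^ ((w ∩ c₀).card) = -1 := by
          refine Odd.neg_one_pow ?_
          rcases Nat.even_or_odd ((w ∩ c₀).card) with he' | ho
          · exact absurd (even_iff_two_dvd.1 he') hc₀
          · exact ho
        rw [hm]; ring
    have h0 : (2:ℂ) * ∑ c ∈ hf.toFinset, ((-1:ℂ)) ^ ((w ∩ c).card) = 0 := by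
      rw [two_mul]; nth_rewrite 2 [key]; rw [Finset.sum_neg_distrib]; ring
    exact (mul_eq_zero.1 h0).resolve_left two_ne_zero

lemma zmod2_cases (x : ZMod 2) : x = 0 ∨ x = 1 := by revert x; decide

lemma supp_ind (s : Finset Q) : supp (ind s) = s := by
  ext q; simp only [supp, ind, Finset.mem_filter, Finset.mem_univ, true_and]
  by_cases h : q ∈ s <;> simp [h]

lemma ind_supp (v : Q → ZMod 2) : ind (supp v) = v := by
  ext q; simp only [supp, ind, Finset.mem_filter, Finset.mem_univ, true_and]
  rcases zmod2_cases (v q) with h | h <;> simp [h]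

omit [Fintype Q] in
lemma ind_symmDiff (a b : Finset Q) : ind (a ∆ b) = ind a + ind b := by
  ext q
  simp only [ind, Pi.add_apply, Finset.mem_symmDiff]
  by_cases ha : q ∈ a <;> by_cases hb : q ∈ b <;> simp [ha, hb] <;> decide

lemma represent (L : Set (Finset Q)) (hL : IsSubgroup L) (ψ : Finset Q → ZMod 2)
    (hψ : ∀ a ∈ L, ∀ b ∈ L, ψ (a ∆ b) = ψ a + ψ b) :
    ∃ z : Finset Q, ∀ γ ∈ L, ((γ ∩ z).card : ZMod 2) = ψ γ := by
  classical
  have hψ0 : ψ ∅ = 0 := by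
    have := hψ ∅ hL.1 ∅ hL.1
    rw [symmDiff_self] at this
    simpa using this
  have hind0 : (0 : Q → ZMod 2) = ind ∅ := by ext q; simp [ind]
  let L' : Submodule (ZMod 2) (Q → ZMod 2) :=
    { carrier := ind '' L
      add_mem' := by
        rintro _ _ ⟨a, ha, rfl⟩ ⟨b, hb, rfl⟩
        exact ⟨a ∆ b, hL.2 a ha b hb, ind_symmDiff a b⟩
      zero_mem' := ⟨∅, hL.1, hind0.symm⟩
      smul_mem' := by
        intro c v hv
        rcases zmod2_cases c with h | h
        · subst h; rw [zero_smul]; exact ⟨∅, hL.1, hind0.symm⟩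
        · subst h; rw [one_smul]; exact hv }
  have memL : ∀ x : L', supp (x : Q → ZMod 2) ∈ L := by
    rintro ⟨_, a, ha, rfl⟩; rwa [supp_ind]
  have hsupp_add : ∀ x y : Q → ZMod 2, supp (x + y) = supp x ∆ supp y := by
    intro x y
    conv_lhs => rw [← ind_supp x, ← ind_supp y, ← ind_symmDiff, supp_ind]
  let ψ' : L' →ₗ[ZMod 2] ZMod 2 :=
    { toFun := fun x => ψ (supp (x : Q → ZMod 2))
      map_add' := by
        intro x y
        have hx := memL x; have hy := memL y
        show ψ (supp ((x : Q → ZMod 2) + y)) = _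
        rw [hsupp_add]
        exact hψ _ hx _ hy
      map_smul' := by
        intro c x
        rcases zmod2_cases c with h | h <;> subst h
        · show ψ (supp (((0 : ZMod 2) • x : L') : Q → ZMod 2)) = _
          rw [zero_smul]
          simp only [ZeroMemClass.coe_zero, RingHom.id_apply, zero_smul, smul_eq_mul,
            zero_mul]
          rw [hind0, supp_ind]
          exact hψ0
        · show ψ (supp (((1 : ZMod 2) • x : L') : Q → ZMod 2)) = _
          rw [one_smul]
          simp }
  obtain ⟨φ, hφ⟩ := LinearMap.exists_extend ψ'
  refine ⟨Finset.univ.filter (fun q => φ (Pi.single q 1) = 1), fun γ hγ => ?_⟩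
  have hdecomp : ind γ = ∑ q ∈ γ, Pi.single q (1 : ZMod 2) := by
    ext q
    rw [Finset.sum_apply]
    simp [ind, Pi.single_apply, Finset.sum_ite_eq]
  have hval : φ (ind γ) = ψ γ := by
    have := LinearMap.congr_fun hφ ⟨ind γ, γ, hγ, rfl⟩
    simpa [ψ', supp_ind] using this
  rw [← hval, hdecomp, map_sum]
  have h1 : ∀ q ∈ γ, φ (Pi.single q 1) =
      (if q ∈ Finset.univ.filter (fun q => φ (Pi.single q 1) = 1) then (1:ZMod 2) else 0) := by
    intro q _
    rcases zmod2_cases (φ (Pi.single q 1)) with h | h <;> simp [h]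
  rw [Finset.sum_congr rfl h1, Finset.sum_ite_mem]
  simp [Finset.inter_comm]

end Aux


section Phase

noncomputable def ζ : ℂ := Complex.exp (Real.pi * Complex.I / 4)

lemma zeta_ne : ζ ≠ 0 := Complex.exp_ne_zero _

lemma zeta_pow8 : ζ ^ (8:ℕ) = 1 := by
  rw [ζ, ← Complex.exp_nat_mul]
  rw [show ((8:ℕ):ℂ) * (Real.pi * Complex.I / 4) = 2 * Real.pi * Complex.I by push_cast; ring]
  exact Complex.exp_two_pi_mul_I

lemma zeta_sq : ζ ^ (2:ℕ) = Complex.I := by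
  rw [ζ, ← Complex.exp_nat_mul]
  rw [show ((2:ℕ):ℂ) * (Real.pi * Complex.I / 4) = (Real.pi/2) * Complex.I by push_cast; ring]
  rw [Complex.exp_mul_I]
  simp

lemma star_zeta : starRingEnd ℂ ζ = ζ⁻¹ := by
  rw [ζ, ← Complex.exp_conj, ← Complex.exp_neg]
  congr 1
  have h : (starRingEnd ℂ) (Real.pi * Complex.I / 4) =
      (Real.pi : ℂ) * (-Complex.I) / 4 := by
    simp [map_div₀, map_ofNat]
  rw [h]; ring

lemma star_zeta_zpow (k : ℤ) : starRingEnd ℂ (ζ ^ k) = ζ ^ (-k) := by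
  rw [map_zpow₀, star_zeta, ← zpow_neg_one, ← zpow_mul]
  ring_nf

lemma zeta_zpow_congr {k l : ℤ} (h : (8:ℤ) ∣ k - l) : ζ ^ k = ζ ^ l := by
  obtain ⟨m, hm⟩ := h
  have h2 : k = l + 8 * m := by omega
  rw [h2, zpow_add₀ zeta_ne, zpow_mul]
  rw [show ζ ^ (8:ℤ) = 1 by rw [show (8:ℤ) = ((8:ℕ):ℤ) by norm_num, zpow_natCast, zeta_pow8]]
  simp

lemma I_zpow_congr {k l : ℤ} (h : (4:ℤ) ∣ k - l) : Complex.I ^ k = Complex.I ^ l := by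
  obtain ⟨m, hm⟩ := h
  have h2 : k = l + 4 * m := by omega
  rw [h2, zpow_add₀ Complex.I_ne_zero, zpow_mul]
  rw [show Complex.I ^ (4:ℤ) = 1 by
    rw [show (4:ℤ) = ((4:ℕ):ℤ) by norm_num, zpow_natCast]; simp [pow_succ, Complex.I_sq]]
  simp

lemma zeta_zpow_two_mul (m : ℤ) : ζ ^ (2 * m) = Complex.I ^ m := by
  rw [zpow_mul, show ζ ^ (2:ℤ) = Complex.I by
    rw [show (2:ℤ)=((2:ℕ):ℤ) by norm_num, zpow_natCast, zeta_sq]]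

lemma I_zpow_two_mul (m : ℤ) : Complex.I ^ (2 * m) = (-1 : ℂ) ^ m := by
  rw [zpow_mul, show Complex.I ^ (2:ℤ) = (-1:ℂ) by
    rw [show (2:ℤ)=((2:ℕ):ℤ) by norm_num, zpow_natCast]; simp [Complex.I_sq]]

lemma neg_one_zpow_congr {k l : ℤ} (h : (2:ℤ) ∣ k - l) : (-1:ℂ) ^ k = (-1:ℂ) ^ l := by
  obtain ⟨m, hm⟩ := h
  have h2 : k = l + 2 * m := by omega
  rw [h2, zpow_add₀ (by norm_num : (-1:ℂ) ≠ 0), zpow_mul]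
  rw [show (-1:ℂ) ^ (2:ℤ) = 1 by norm_num]
  simp

lemma neg_one_pow_eq_zeta (n : ℕ) : (-1:ℂ) ^ n = ζ ^ (4*(n:ℤ)) := by
  rw [show (4*(n:ℤ)) = 2*(2*(n:ℤ)) by ring, zeta_zpow_two_mul, I_zpow_two_mul, zpow_natCast]

lemma I_pow_eq_zeta (k : ℤ) : Complex.I ^ k = ζ ^ (2*k) := (zeta_zpow_two_mul k).symm

end Phase

section Core
variable {Q : Type*} [Fintype Q] [DecidableEq Q]
variable (C : CSS Q) (b : Q → ℤ) (α : Finset Q)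

lemma SZ_subset_G : C.SZ ⊆ G C α := fun f hf => subset_closure' _ (Or.inl hf)

lemma interGen_mem_G {β : Finset Q} (hβ : β ∈ ZX C) : α ∩ β ∈ G C α :=
  subset_closure' _ (Or.inr ⟨β, hβ, rfl⟩)

lemma ZofG_subset_ZX : Zof (G C α) ⊆ ZX C :=
  fun γ hγ f hf => hγ f (SZ_subset_G C α hf)

lemma even_inter_alpha {γ : Finset Q} (hγ : γ ∈ Zof (G C α)) : 2 ∣ (γ ∩ α).card := by
  have h := hγ (α ∩ γ) (interGen_mem_G C α (ZofG_subset_ZX C α hγ))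
  have hs : γ ∩ (α ∩ γ) = γ ∩ α := by ext x; simp; tauto
  rwa [hs] at h

lemma even_pair {γ₁ γ₂ : Finset Q} (h1 : γ₁ ∈ Zof (G C α)) (h2 : γ₂ ∈ Zof (G C α)) :
    2 ∣ ((γ₁ ∩ α) ∩ (γ₂ ∩ α)).card := by
  have h := h1 (α ∩ γ₂) (interGen_mem_G C α (ZofG_subset_ZX C α h2))
  have hs : γ₁ ∩ (α ∩ γ₂) = (γ₁ ∩ α) ∩ (γ₂ ∩ α) := by ext x; simp; tauto
  rwa [hs] at h

lemma E_nonempty (hb : ∀ q, Odd (b q)) : (E C b α).Nonempty := by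
  classical
  set L := Zof (G C α) with hLdef
  have hpsi : ∀ a ∈ L, ∀ b' ∈ L,
      ((g b ((a ∆ b') ∩ α) / 2 : ℤ) : ZMod 2) =
        ((g b (a ∩ α) / 2 : ℤ) : ZMod 2) + ((g b (b' ∩ α) / 2 : ℤ) : ZMod 2) := by
    intro a ha b' hb'
    have hset : (a ∆ b') ∩ α = (a ∩ α) ∆ (b' ∩ α) := inter_symmDiff_distrib α a b'
    have hg := g_symmDiff b (a ∩ α) (b' ∩ α)
    have hA : (2:ℤ) ∣ g b (a ∩ α) := by
      have h1 := g_parity b hb (a ∩ α)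
      have h2' : (2:ℤ) ∣ ((a ∩ α).card : ℤ) :=
        Int.natCast_dvd_natCast.2 (even_inter_alpha C α ha)
      omega
    have hB : (2:ℤ) ∣ g b (b' ∩ α) := by
      have h1 := g_parity b hb (b' ∩ α)
      have h2' : (2:ℤ) ∣ ((b' ∩ α).card : ℤ) :=
        Int.natCast_dvd_natCast.2 (even_inter_alpha C α hb')
      omega
    have hC2 : (2:ℤ) ∣ g b ((a ∩ α) ∩ (b' ∩ α)) := by
      have h1 := g_parity b hb ((a ∩ α) ∩ (b' ∩ α))
      have h2' : (2:ℤ) ∣ (((a ∩ α) ∩ (b' ∩ α)).card : ℤ) :=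
        Int.natCast_dvd_natCast.2 (even_pair C α ha hb')
      omega
    have hdiv : g b ((a ∆ b') ∩ α) / 2 =
        g b (a ∩ α) / 2 + g b (b' ∩ α) / 2 - g b ((a ∩ α) ∩ (b' ∩ α)) := by
      rw [hset, hg]; omega
    rw [hdiv]
    push_cast
    rw [show ((g b ((a ∩ α) ∩ (b' ∩ α)) : ℤ) : ZMod 2) = 0 from
      (ZMod.intCast_zmod_eq_zero_iff_dvd _ 2).2 hC2]
    ring
  obtain ⟨z, hz⟩ := represent L (Zof_isSubgroup _)
    (fun γ => ((g b (γ ∩ α) / 2 : ℤ) : ZMod 2)) hpsi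
  refine ⟨z, fun γ hγ => ?_⟩
  have hzγ := hz γ hγ
  have heven : (2:ℤ) ∣ g b (γ ∩ α) := by
    have h1 := g_parity b hb (γ ∩ α)
    have h2 := even_inter_alpha C α hγ
    have h2' : (2:ℤ) ∣ ((γ ∩ α).card : ℤ) := Int.natCast_dvd_natCast.2 h2
    omega
  have hdiff : ((((γ ∩ z).card : ℤ) - g b (γ ∩ α) / 2 : ℤ) : ZMod 2) = 0 := by
    push_cast
    rw [hzγ]
    ring
  have hdvd : (2:ℤ) ∣ (((γ ∩ z).card : ℤ) - g b (γ ∩ α) / 2) :=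
    (ZMod.intCast_zmod_eq_zero_iff_dvd _ 2).1 hdiff
  rw [Int.ModEq]
  have hcc : ((z ∩ γ).card : ℤ) = ((γ ∩ z).card : ℤ) := by rw [Finset.inter_comm]
  omega

end Core

section Core2
variable {Q : Type*} [Fintype Q] [DecidableEq Q]
variable (C : CSS Q) (b : Q → ℤ) (α : Finset Q)

lemma four_dvd_g_inter (htinv : TInv C b) {γ c : Finset Q} (hγ : γ ∈ ZX C) (hc : c ∈ C.SX) :
    (4:ℤ) ∣ g b (γ ∩ c) := by
  have h1 := htinv.1 c hc
  have h2 := htinv.2 c hc γ hγ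
  omega

lemma perC (htinv : TInv C b) (hb : ∀ q, Odd (b q)) {β γ c : Finset Q}
    (hβ : β ∈ ZX C) (hγ : γ ∈ ZX C) (hc : c ∈ C.SX) :
    ζ ^ (g b (β ∆ (α ∆ c)) - g b (γ ∆ (α ∆ c))) =
      ζ ^ (g b β - g b γ) * Complex.I ^ (g b (α ∩ γ) - g b (α ∩ β)) *
        (-1:ℂ) ^ (((α ∩ (β ∆ γ)) ∩ c).card) := by
  rw [neg_one_pow_eq_zeta, I_pow_eq_zeta, ← zpow_add₀ zeta_ne, ← zpow_add₀ zeta_ne]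
  apply zeta_zpow_congr
  have e1 := g_symmDiff b β (α ∆ c)
  have e2 := g_symmDiff b γ (α ∆ c)
  have s1 : β ∩ (α ∆ c) = (α ∩ β) ∆ (c ∩ β) := by
    rw [Finset.inter_comm β, inter_symmDiff_distrib]
  have s2 : γ ∩ (α ∆ c) = (α ∩ γ) ∆ (c ∩ γ) := by
    rw [Finset.inter_comm γ, inter_symmDiff_distrib]
  have c1 : (α ∩ β) ∩ (c ∩ β) = α ∩ β ∩ c := by ext x; simp; tauto
  have c2 : (α ∩ γ) ∩ (c ∩ γ) = α ∩ γ ∩ c := by ext x; simp; tauto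
  have e3 : g b (β ∩ (α ∆ c)) =
      g b (α ∩ β) + g b (c ∩ β) - 2 * g b (α ∩ β ∩ c) := by
    rw [s1, g_symmDiff, c1]
  have e4 : g b (γ ∩ (α ∆ c)) =
      g b (α ∩ γ) + g b (c ∩ γ) - 2 * g b (α ∩ γ ∩ c) := by
    rw [s2, g_symmDiff, c2]
  have f1 : (4:ℤ) ∣ g b (c ∩ β) := by
    rw [Finset.inter_comm]; exact four_dvd_g_inter C b htinv hβ hc
  have f2 : (4:ℤ) ∣ g b (c ∩ γ) := by
    rw [Finset.inter_comm]; exact four_dvd_g_inter C b htinv hγ hc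
  have sd : (α ∩ (β ∆ γ)) ∩ c = (α ∩ β ∩ c) ∆ (α ∩ γ ∩ c) := by
    ext x; simp [Finset.mem_symmDiff]; tauto
  rw [sd]
  have cd := card_symmDiff' (α ∩ β ∩ c) (α ∩ γ ∩ c)
  have q1 := g_parity b hb (α ∩ β ∩ c)
  have q2 := g_parity b hb (α ∩ γ ∩ c)
  omega

lemma ZX_eq_Zof : ZX C = Zof C.SZ := rfl

lemma tolerable_key (htol : Tolerable C α) {δ : Finset Q} (hδ : δ ∈ ZX C)
    (hw : α ∩ δ ∈ ZZ C) : α ∩ δ ∈ C.SZ ∧ δ ∈ Zof (G C α) := by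
  have hmem : α ∩ δ ∈ G C α := interGen_mem_G C α hδ
  have hnl := htol _ hmem
  have hSZ : α ∩ δ ∈ C.SZ := by
    by_contra h
    exact hnl ⟨hw, h⟩
  refine ⟨hSZ, ?_⟩
  apply mem_Zof_closure
  rintro t (ht | ⟨β', hβ', rfl⟩)
  · exact hδ t ht
  · have h1 := hβ' (α ∩ δ) hSZ
    have hs : β' ∩ (α ∩ δ) = δ ∩ (α ∩ β') := by ext x; simp; tauto
    rwa [hs] at h1

lemma notZofG (hdual : Dual C) {δ : Finset Q} (hδ : δ ∈ ZX C) (hw : α ∩ δ ∉ ZZ C) :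
    δ ∉ Zof (G C α) := by
  intro hzg
  apply hw
  have hSZ : α ∩ δ ∈ C.SZ := by
    rw [hdual.1]
    intro γ' hγ'
    have h1 := hzg (α ∩ γ') (interGen_mem_G C α hγ')
    have hs : (α ∩ δ) ∩ γ' = δ ∩ (α ∩ γ') := by ext x; simp; tauto
    rw [hs]; exact h1
  exact fun c hc => C.comm _ hSZ c hc

lemma E_coset {z₀ : Finset Q} (hz₀ : z₀ ∈ E C b α) (z : Finset Q) :
    z ∈ E C b α ↔ z ∆ z₀ ∈ Zof (Zof (G C α)) := by
  constructor
  · intro hzE γ' hγ'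
    have h1 := hzE γ' hγ'
    have h2 := hz₀ γ' hγ'
    rw [Int.ModEq] at h1 h2
    have hsd := card_inter_symmDiff_parity γ' z z₀
    have hdvd : (2:ℤ) ∣ (((z ∆ z₀) ∩ γ').card : ℤ) := by omega
    exact_mod_cast hdvd
  · intro hP γ' hγ'
    have h2 := hz₀ γ' hγ'
    have hpar := Int.natCast_dvd_natCast.2 (hP γ' hγ')
    rw [Int.ModEq] at h2 ⊢
    have hsd := card_inter_symmDiff_parity γ' z z₀
    omega

open scoped Classical in
lemma scalar_main (hdual : Dual C) (htol : Tolerable C α) (htinv : TInv C b)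
    (hb : ∀ q, Odd (b q)) {z₀ : Finset Q} (hz₀ : z₀ ∈ E C b α)
    {β γ : Finset Q} (hβ : β ∈ ZX C) (hγ : γ ∈ ZX C) :
    (((Set.toFinite C.SX).toFinset.card : ℂ))⁻¹ *
        ∑ c ∈ (Set.toFinite C.SX).toFinset, ζ ^ (g b (β ∆ (α ∆ c)) - g b (γ ∆ (α ∆ c)))
      = ζ ^ (g b β - g b γ) *
        ((((Set.toFinite (E C b α)).toFinset.card : ℂ))⁻¹ *
          ∑ z ∈ (Set.toFinite (E C b α)).toFinset,
            (-1:ℂ) ^ ((β ∩ z).card) * (-1:ℂ) ^ ((γ ∩ z).card)) := by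
  have hδX : β ∆ γ ∈ ZX C := by
    rw [ZX_eq_Zof]
    exact (Zof_isSubgroup C.SZ).2 β hβ γ hγ
  -- LHS sum transformation
  have hLsum : ∑ c ∈ (Set.toFinite C.SX).toFinset,
        ζ ^ (g b (β ∆ (α ∆ c)) - g b (γ ∆ (α ∆ c))) =
      ζ ^ (g b β - g b γ) * Complex.I ^ (g b (α ∩ γ) - g b (α ∩ β)) *
        ∑ c ∈ (Set.toFinite C.SX).toFinset, (-1:ℂ) ^ (((α ∩ (β ∆ γ)) ∩ c).card) := by
    rw [Finset.mul_sum]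
    exact Finset.sum_congr rfl fun c hc =>
      perC C b α htinv hb hβ hγ ((Set.toFinite C.SX).mem_toFinset.1 hc)
  have hchar1 := char_sum C.SX C.hSX (Set.toFinite C.SX) (α ∩ (β ∆ γ))
  -- RHS sum transformation
  have hz_eq : ∀ z : Finset Q, (-1:ℂ) ^ ((β ∩ z).card) * (-1:ℂ) ^ ((γ ∩ z).card) =
      (-1:ℂ) ^ (((β ∆ γ) ∩ z).card) := by
    intro z
    rw [← pow_add]
    refine (neg_one_pow_congr ?_).symm
    have := card_inter_symmDiff_parity z β γ
    push_cast
    omega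
  have hbij : ∑ z ∈ (Set.toFinite (E C b α)).toFinset, (-1:ℂ) ^ (((β ∆ γ) ∩ z).card) =
      ∑ p ∈ (Set.toFinite (Zof (Zof (G C α)))).toFinset,
        (-1:ℂ) ^ (((β ∆ γ) ∩ (p ∆ z₀)).card) := by
    refine Finset.sum_nbij' (fun z => z ∆ z₀) (fun p => p ∆ z₀) ?_ ?_ ?_ ?_ ?_
    · intro z hz
      exact (Set.toFinite _).mem_toFinset.2
        ((E_coset C b α hz₀ z).1 ((Set.toFinite _).mem_toFinset.1 hz))
    · intro p hp
      refine (Set.toFinite _).mem_toFinset.2 ((E_coset C b α hz₀ (p ∆ z₀)).2 ?_)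
      rw [symmDiff_involutive' z₀ p]
      exact (Set.toFinite _).mem_toFinset.1 hp
    · intro a _; exact symmDiff_involutive' z₀ a
    · intro a _; exact symmDiff_involutive' z₀ a
    · intro a _
      rw [symmDiff_involutive' z₀ a]
  have hsplit : ∀ p : Finset Q, (-1:ℂ) ^ (((β ∆ γ) ∩ (p ∆ z₀)).card) =
      (-1:ℂ) ^ (((β ∆ γ) ∩ p).card) * (-1:ℂ) ^ (((β ∆ γ) ∩ z₀).card) := by
    intro p
    rw [← pow_add]
    refine neg_one_pow_congr ?_
    have := card_inter_symmDiff_parity' (β ∆ γ) p z₀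
    push_cast
    omega
  have hchar2 := char_sum (Zof (Zof (G C α))) (Zof_isSubgroup _) (Set.toFinite _) (β ∆ γ)
  have hcards : (Set.toFinite (E C b α)).toFinset.card =
      (Set.toFinite (Zof (Zof (G C α)))).toFinset.card := by
    refine Finset.card_nbij' (fun z => z ∆ z₀) (fun p => p ∆ z₀) ?_ ?_ ?_ ?_
    · intro z hz
      exact (Set.toFinite _).mem_toFinset.2
        ((E_coset C b α hz₀ z).1 ((Set.toFinite _).mem_toFinset.1 hz))
    · intro p hp
      refine (Set.toFinite _).mem_toFinset.2 ((E_coset C b α hz₀ (p ∆ z₀)).2 ?_)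
      rw [symmDiff_involutive' z₀ p]
      exact (Set.toFinite _).mem_toFinset.1 hp
    · intro a _; exact symmDiff_involutive' z₀ a
    · intro a _; exact symmDiff_involutive' z₀ a
  have hZofP : (∀ h ∈ Zof (Zof (G C α)), 2 ∣ ((β ∆ γ) ∩ h).card) ↔
      (β ∆ γ) ∈ Zof (G C α) := by
    constructor
    · intro h
      have h' : (β ∆ γ) ∈ Zof (Zof (Zof (G C α))) := h
      rwa [Zof_Zof_Zof] at h'
    · intro h
      have h' : (β ∆ γ) ∈ Zof (Zof (Zof (G C α))) := by rwa [Zof_Zof_Zof]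
      exact h'
  have hRsum : ∑ z ∈ (Set.toFinite (E C b α)).toFinset,
        (-1:ℂ) ^ ((β ∩ z).card) * (-1:ℂ) ^ ((γ ∩ z).card) =
      (∑ p ∈ (Set.toFinite (Zof (Zof (G C α)))).toFinset,
          (-1:ℂ) ^ (((β ∆ γ) ∩ p).card)) * (-1:ℂ) ^ (((β ∆ γ) ∩ z₀).card) := by
    rw [Finset.sum_congr rfl (fun z _ => hz_eq z), hbij,
      Finset.sum_congr rfl (fun p _ => hsplit p), ← Finset.sum_mul]
  have hSXcard : (((Set.toFinite C.SX).toFinset.card : ℕ) : ℂ) ≠ 0 :=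
    Nat.cast_ne_zero.2 (Finset.card_ne_zero_of_mem
      ((Set.toFinite C.SX).mem_toFinset.2 C.hSX.1))
  have hPcard : (((Set.toFinite (Zof (Zof (G C α)))).toFinset.card : ℕ) : ℂ) ≠ 0 :=
    Nat.cast_ne_zero.2 (Finset.card_ne_zero_of_mem
      ((Set.toFinite _).mem_toFinset.2 (Zof_isSubgroup _).1))
  by_cases hw : α ∩ (β ∆ γ) ∈ ZZ C
  · obtain ⟨hSZw, hδZof⟩ := tolerable_key C α htol hδX hw
    have hphase : Complex.I ^ (g b (α ∩ γ) - g b (α ∩ β)) =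
        (-1:ℂ) ^ (((β ∆ γ) ∩ z₀).card) := by
      rw [show (-1:ℂ) ^ (((β ∆ γ) ∩ z₀).card) =
          Complex.I ^ (2 * ((((β ∆ γ) ∩ z₀).card : ℤ))) from by
        rw [I_zpow_two_mul, zpow_natCast]]
      apply I_zpow_congr
      have sδ : α ∩ (β ∆ γ) = (α ∩ β) ∆ (α ∩ γ) := by
        ext x; simp [Finset.mem_symmDiff]; tauto
      have e5 : g b (α ∩ (β ∆ γ)) =
          g b (α ∩ β) + g b (α ∩ γ) - 2 * g b ((α ∩ β) ∩ (α ∩ γ)) := by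
        rw [sδ, g_symmDiff]
      have hmod := hz₀ (β ∆ γ) hδZof
      rw [Int.ModEq] at hmod
      have hcomm : (β ∆ γ) ∩ α = α ∩ (β ∆ γ) := Finset.inter_comm _ _
      rw [hcomm] at hmod
      have hccz : ((z₀ ∩ (β ∆ γ)).card : ℤ) = (((β ∆ γ) ∩ z₀).card : ℤ) := by
        rw [Finset.inter_comm]
      have pk := g_parity b hb ((α ∩ β) ∩ (α ∩ γ))
      have pX := g_parity b hb (α ∩ β)
      have s6 : (β ∆ γ) ∩ (α ∩ β) = (α ∩ β) ∆ (γ ∩ (α ∩ β)) := by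
        ext x; simp [Finset.mem_symmDiff]; tauto
      have cd6 : (((β ∆ γ) ∩ (α ∩ β)).card : ℤ) =
          ((α ∩ β).card : ℤ) + ((γ ∩ (α ∩ β)).card : ℤ)
            - 2 * (((α ∩ β) ∩ (γ ∩ (α ∩ β))).card : ℤ) := by
        rw [s6]; exact card_symmDiff' _ _
      have c7 : (α ∩ β) ∩ (α ∩ γ) = γ ∩ (α ∩ β) := by ext x; simp; tauto
      have heven_final : 2 ∣ ((β ∆ γ) ∩ (α ∩ β)).card := by
        have h1 := hβ (α ∩ (β ∆ γ)) hSZw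
        have hs : β ∩ (α ∩ (β ∆ γ)) = (β ∆ γ) ∩ (α ∩ β) := by
          ext x; simp [Finset.mem_symmDiff]; tauto
        rwa [hs] at h1
      have heven_final' : (2:ℤ) ∣ (((β ∆ γ) ∩ (α ∩ β)).card : ℤ) :=
        Int.natCast_dvd_natCast.2 heven_final
      rw [c7] at e5 pk
      omega
    rw [hLsum, hchar1, hRsum, hchar2,
      if_pos (show ∀ c ∈ C.SX, 2 ∣ ((α ∩ (β ∆ γ)) ∩ c).card from hw),
      if_pos (hZofP.2 hδZof), hphase, hcards]
    have hx : ∀ (n x : ℂ), n ≠ 0 → n⁻¹ * (x * n) = x := by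
      intro n x h; field_simp
    have hy : ∀ (n x : ℂ), n ≠ 0 → n⁻¹ * (n * x) = x := by
      intro n x h; field_simp
    rw [hx _ _ hSXcard, hy _ _ hPcard]
  · have hδnot := notZofG C α hdual hδX hw
    rw [hLsum, hchar1, hRsum, hchar2,
      if_neg (show ¬ ∀ c ∈ C.SX, 2 ∣ ((α ∩ (β ∆ γ)) ∩ c).card from hw),
      if_neg (fun h => hδnot (hZofP.1 h))]
    simp

end Core2

section MatrixLayer
variable {Q : Type*} [Fintype Q] [DecidableEq Q]

lemma add_self_zmod2 (w : Q → ZMod 2) : w + w = 0 := by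
  ext q
  rcases zmod2_cases (w q) with h | h <;> simp [h]
  rfl

lemma XM_mul_apply (c : Finset Q) (A : M Q) (u v : Q → ZMod 2) :
    (XM c * A) u v = A (u + ind c) v := by
  rw [Matrix.mul_apply]
  have hcong : ∀ w : Q → ZMod 2, XM c u w * A w v =
      if w = u + ind c then A w v else 0 := by
    intro w
    have hiff : (u = w + ind c) ↔ (w = u + ind c) := by
      constructor
      · intro h; rw [h, add_assoc, add_self_zmod2, add_zero]
      · intro h; rw [h, add_assoc, add_self_zmod2, add_zero]
    rw [XM, Matrix.of_apply]
    by_cases h : w = u + ind c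
    · rw [if_pos (hiff.2 h), if_pos h, one_mul]
    · rw [if_neg (fun h' => h (hiff.1 h')), if_neg h, zero_mul]
  rw [Finset.sum_congr rfl (fun w _ => hcong w), Finset.sum_ite_eq' Finset.univ _ _]
  simp

lemma mul_XM_apply (c : Finset Q) (A : M Q) (u v : Q → ZMod 2) :
    (A * XM c) u v = A u (v + ind c) := by
  rw [Matrix.mul_apply]
  have hcong : ∀ w : Q → ZMod 2, A u w * XM c w v =
      if w = v + ind c then A u w else 0 := by
    intro w
    rw [XM, Matrix.of_apply]
    by_cases h : w = v + ind c
    · rw [if_pos h, if_pos h, mul_one]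
    · rw [if_neg h, if_neg h, mul_zero]
  rw [Finset.sum_congr rfl (fun w _ => hcong w), Finset.sum_ite_eq' Finset.univ _ _]
  simp

lemma UM_eq (b : Q → ℤ) : UM b = Matrix.diagonal fun v => ζ ^ (g b (supp v)) := rfl

lemma UM_conjT (b : Q → ℤ) :
    (UM b)ᴴ = Matrix.diagonal fun v => ζ ^ (-(g b (supp v))) := by
  have hst : (star fun v : Q → ZMod 2 => ζ ^ g b (supp v)) =
      fun v : Q → ZMod 2 => ζ ^ (-(g b (supp v))) := by
    funext v
    rw [Pi.star_apply]
    exact star_zeta_zpow _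
  rw [UM_eq, Matrix.diagonal_conjTranspose, hst]

lemma supp_add_ind (v : Q → ZMod 2) (α : Finset Q) : supp (v + ind α) = supp v ∆ α := by
  conv_lhs => rw [← ind_supp v, ← ind_symmDiff, supp_ind]

end MatrixLayer

/-- Theorem 1 (tolerable case): a tolerable `X` error propagates through the transversal
T-type gate `U` followed by `S_X`-depolarization into the original error together with a
uniformly random `Z` error drawn from `E_α` applied after `U`. -/
theorem transversal_T_propagation_tolerable
    (C : CSS Q) (b : Q → ℤ) (hb : ∀ q, Odd (b q))
    (hdual : Dual C) (hsingle : SingleQubit C) (hinter : Inter C) (htinv : TInv C b)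
    (α : Finset Q) (htol : Tolerable C α) (ρ : M Q) (hρ : Encoded C ρ) :
    (E C b α).Nonempty ∧
    (((Set.toFinite C.SX).toFinset.card : ℂ))⁻¹ •
        ∑ c ∈ (Set.toFinite C.SX).toFinset,
          XM c * (UM b * (XM α * ρ * XM α) * (UM b)ᴴ) * XM c
      = XM α *
        ((((Set.toFinite (E C b α)).toFinset.card : ℂ))⁻¹ •
          ∑ z ∈ (Set.toFinite (E C b α)).toFinset,
            ZM z * (UM b * ρ * (UM b)ᴴ) * ZM z) * XM α := by
  classical
  obtain ⟨z₀, hz₀⟩ := E_nonempty C b α hb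
  refine ⟨⟨z₀, hz₀⟩, ?_⟩
  ext u v
  conv_lhs => rw [Matrix.smul_apply, Matrix.sum_apply]
  conv_rhs => rw [mul_XM_apply, XM_mul_apply, Matrix.smul_apply, Matrix.sum_apply]
  simp only [smul_eq_mul]
  set u' := u + ind α with hu'
  set v' := v + ind α with hv'
  set r := ρ u' v' with hrdef
  have hXrow : ∀ c ∈ C.SX, ∀ x y, ρ (x + ind c) y = ρ x y := by
    intro c hc x y
    calc ρ (x + ind c) y = (XM c * ρ) x y := (XM_mul_apply c ρ x y).symm
      _ = ρ x y := by rw [(hρ.2.1 c hc).1]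
  have hXcol : ∀ c ∈ C.SX, ∀ x y, ρ x (y + ind c) = ρ x y := by
    intro c hc x y
    calc ρ x (y + ind c) = (ρ * XM c) x y := (mul_XM_apply c ρ x y).symm
      _ = ρ x y := by rw [(hρ.2.1 c hc).2]
  have hterm1 : ∀ c ∈ C.SX,
      (XM c * (UM b * (XM α * ρ * XM α) * (UM b)ᴴ) * XM c) u v =
        ζ ^ (g b (supp u' ∆ (α ∆ c)) - g b (supp v' ∆ (α ∆ c))) * r := by
    intro c hc
    rw [mul_XM_apply, XM_mul_apply, UM_conjT, Matrix.mul_diagonal, UM_eq,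
      Matrix.diagonal_mul, mul_XM_apply, XM_mul_apply]
    have h0 : ind α + ind α = (0 : Q → ZMod 2) := add_self_zmod2 _
    have f1 : u + ind c + ind α = u' + ind c := by rw [hu']; abel
    have f2 : v + ind c + ind α = v' + ind c := by rw [hv']; abel
    have f3 : ρ (u + ind c + ind α) (v + ind c + ind α) = r := by
      rw [f1, f2, hXrow c hc, hXcol c hc]
    have e3 : u + ind c = u' + ind (α ∆ c) := by
      rw [ind_symmDiff, hu']
      calc u + ind c = u + 0 + ind c := by rw [add_zero]
        _ = u + (ind α + ind α) + ind c := by rw [h0]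
        _ = u + ind α + (ind α + ind c) := by abel
    have e4 : v + ind c = v' + ind (α ∆ c) := by
      rw [ind_symmDiff, hv']
      calc v + ind c = v + 0 + ind c := by rw [add_zero]
        _ = v + (ind α + ind α) + ind c := by rw [h0]
        _ = v + ind α + (ind α + ind c) := by abel
    have f4 : supp (u + ind c) = supp u' ∆ (α ∆ c) := by rw [e3, supp_add_ind]
    have f5 : supp (v + ind c) = supp v' ∆ (α ∆ c) := by rw [e4, supp_add_ind]
    rw [f3, f4, f5, sub_eq_add_neg, zpow_add₀ zeta_ne]
    ring
  have hterm2 : ∀ z : Finset Q,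
      (ZM z * (UM b * ρ * (UM b)ᴴ) * ZM z) u' v' =
        ((-1:ℂ) ^ ((supp u' ∩ z).card) * (-1:ℂ) ^ ((supp v' ∩ z).card)) *
          (ζ ^ (g b (supp u') - g b (supp v')) * r) := by
    intro z
    rw [ZM, Matrix.mul_diagonal, Matrix.diagonal_mul, UM_conjT, Matrix.mul_diagonal,
      UM_eq, Matrix.diagonal_mul, sub_eq_add_neg, zpow_add₀ zeta_ne]
    ring
  rw [Finset.sum_congr rfl (fun c hc => hterm1 c ((Set.toFinite C.SX).mem_toFinset.1 hc)),
    ← Finset.sum_mul, Finset.sum_congr rfl (fun z _ => hterm2 z), ← Finset.sum_mul]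
  by_cases hr : r = 0
  · rw [hr]
    ring
  · have hβX : supp u' ∈ ZX C := by
      intro f hf
      by_contra hodd
      have h1 : (ZM f * ρ) u' v' = ρ u' v' := by rw [(hρ.2.2 f hf).1]
      rw [ZM, Matrix.diagonal_mul] at h1
      have hO : Odd ((supp u' ∩ f).card) := Nat.odd_iff.2 (by omega)
      rw [hO.neg_one_pow] at h1
      apply hr
      have h2 : (2:ℂ) * r = 0 := by rw [hrdef]; linear_combination -h1
      exact (mul_eq_zero.1 h2).resolve_left two_ne_zero
    have hγX : supp v' ∈ ZX C := by
      intro f hf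
      by_contra hodd
      have h1 : (ρ * ZM f) u' v' = ρ u' v' := by rw [(hρ.2.2 f hf).2]
      rw [ZM, Matrix.mul_diagonal] at h1
      have hO : Odd ((supp v' ∩ f).card) := Nat.odd_iff.2 (by omega)
      rw [hO.neg_one_pow] at h1
      apply hr
      have h2 : (2:ℂ) * r = 0 := by rw [hrdef]; linear_combination -h1
      exact (mul_eq_zero.1 h2).resolve_left two_ne_zero
    have hSM := scalar_main C b α hdual htol htinv hb hz₀ hβX hγX
    linear_combination r * hSM


end CC
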